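/- arXiv:2202.03077 — 4 statements merged into one kernel-verified Lean document; each statement's English description precedes it below -/
import Mathlib

section
/- Let k: X×X→ℝ with X ⊆ ℝ^d satisfy |k(x,y) − k(x',y')| ≤ L₂(‖x−x'‖ + ‖y−y'‖) for the Euclidean norm. Let S_P = {x_i}_{i=1}^n, S_Q = {y_i}_{i=1}^n and S̃_Q = {ỹ_i}_{i=1}^n with ‖ỹ_i − y_i‖_∞ ≤ ε for all i. Let S_P', S_Q', S̃_Q' be obtained by replacing (x₁, y₁, ỹ₁) with any other triple (x₁', y₁', ỹ₁') with x₁' ∈ X, y₁' ∈ X, ỹ₁' ∈ X and ‖ỹ₁' − y₁'‖_∞ ≤ ε. Then | [MMD̂²(S_P, S̃_Q; k) − MMD̂²(S_P, S_Q; k)] − [MMD̂²(S_P', S̃_Q'; k) − MMD̂²(S_P', S_Q'; k)] | ≤ 16 L₂ ε √d / n. -/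
noncomputable section

/-- `H_ij`-type term for the MMD U-statistic. -/
def Hker {d : ℕ} (k : EuclideanSpace ℝ (Fin d) → EuclideanSpace ℝ (Fin d) → ℝ)
    (x x' y y' : EuclideanSpace ℝ (Fin d)) : ℝ :=
  k x x' + k y y' - k x y' - k x' y

/-- The U-statistic estimator `MMD̂²(S_P, S_Q; k) = (1/(n(n-1))) ∑_{i ≠ j} H_ij`. -/
def MMDhat {d : ℕ} (n : ℕ)
    (k : EuclideanSpace ℝ (Fin d) → EuclideanSpace ℝ (Fin d) → ℝ)
    (X Y : Fin n → EuclideanSpace ℝ (Fin d)) : ℝ :=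
  (1 / ((n : ℝ) * ((n : ℝ) - 1))) *
    ∑ i, ∑ j, if i = j then (0 : ℝ) else Hker k (X i) (X j) (Y i) (Y j)

lemma coord_norm_le {d : ℕ} (v : EuclideanSpace ℝ (Fin d)) (ε : ℝ) (hε : 0 ≤ ε)
    (h : ∀ t, |v t| ≤ ε) : ‖v‖ ≤ ε * Real.sqrt d := by
  rw [EuclideanSpace.norm_eq]
  have h1 : ∑ t, ‖v t‖ ^ 2 ≤ ∑ _t : Fin d, ε ^ 2 := by
    apply Finset.sum_le_sum; intro t _
    have := h t
    rw [Real.norm_eq_abs]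
    nlinarith [abs_nonneg (v t)]
  calc Real.sqrt (∑ t, ‖v t‖ ^ 2) ≤ Real.sqrt (∑ _t : Fin d, ε ^ 2) := Real.sqrt_le_sqrt h1
    _ = ε * Real.sqrt d := by
        rw [Finset.sum_const, Finset.card_univ, Fintype.card_fin, nsmul_eq_mul,
          Real.sqrt_mul (by positivity), Real.sqrt_sq hε, mul_comm]

lemma Hker_diff_bound {d : ℕ} (Xset : Set (EuclideanSpace ℝ (Fin d)))
    (k : EuclideanSpace ℝ (Fin d) → EuclideanSpace ℝ (Fin d) → ℝ)
    (L₂ E : ℝ) (hL₂ : 0 < L₂)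
    (hlip : ∀ x ∈ Xset, ∀ y ∈ Xset, ∀ x' ∈ Xset, ∀ y' ∈ Xset,
      |k x y - k x' y'| ≤ L₂ * (‖x - x'‖ + ‖y - y'‖))
    {x x' y y' yt yt' : EuclideanSpace ℝ (Fin d)}
    (hx : x ∈ Xset) (hx' : x' ∈ Xset) (hy : y ∈ Xset) (hy' : y' ∈ Xset)
    (hyt : yt ∈ Xset) (hyt' : yt' ∈ Xset)
    (h1 : ‖yt - y‖ ≤ E) (h2 : ‖yt' - y'‖ ≤ E) :
    |Hker k x x' yt yt' - Hker k x x' y y'| ≤ 4 * L₂ * E := by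
  have a1 := hlip yt hyt yt' hyt' y hy y' hy'
  have a2 := hlip x hx yt' hyt' x hx y' hy'
  have a3 := hlip x' hx' yt hyt x' hx' y hy
  rw [sub_self, norm_zero] at a2 a3
  have b1 := abs_le.mp a1
  have b2 := abs_le.mp a2
  have b3 := abs_le.mp a3
  rw [abs_le]
  unfold Hker
  constructor <;> nlinarith [norm_nonneg (yt - y), norm_nonneg (yt' - y')]

/-- bounded differences of the adversarial MMD error: replacing the first
sample triple `(x₁, y₁, ỹ₁)` by any other admissible triple changes the error
`MMD̂²(S_P, S̃_Q; k) − MMD̂²(S_P, S_Q; k)` by at most `16 L₂ ε √d / n`. -/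
theorem statement5 {d : ℕ} (Xset : Set (EuclideanSpace ℝ (Fin d)))
    (k : EuclideanSpace ℝ (Fin d) → EuclideanSpace ℝ (Fin d) → ℝ)
    (L₂ ε : ℝ) (hL₂ : 0 < L₂) (hε : 0 ≤ ε)
    (hlip : ∀ x ∈ Xset, ∀ y ∈ Xset, ∀ x' ∈ Xset, ∀ y' ∈ Xset,
      |k x y - k x' y'| ≤ L₂ * (‖x - x'‖ + ‖y - y'‖))
    (n : ℕ) (hn : 0 < n)
    (X Y Yt : Fin n → EuclideanSpace ℝ (Fin d))
    (hX : ∀ i, X i ∈ Xset) (hY : ∀ i, Y i ∈ Xset) (hYt : ∀ i, Yt i ∈ Xset)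
    (hpert : ∀ i, ∀ t : Fin d, |Yt i t - Y i t| ≤ ε)
    (x₁' y₁' yt₁' : EuclideanSpace ℝ (Fin d))
    (hx₁' : x₁' ∈ Xset) (hy₁' : y₁' ∈ Xset) (hyt₁' : yt₁' ∈ Xset)
    (hpert' : ∀ t : Fin d, |yt₁' t - y₁' t| ≤ ε) :
    |(MMDhat n k X Yt - MMDhat n k X Y) -
        (MMDhat n k (Function.update X ⟨0, hn⟩ x₁') (Function.update Yt ⟨0, hn⟩ yt₁') -
          MMDhat n k (Function.update X ⟨0, hn⟩ x₁') (Function.update Y ⟨0, hn⟩ y₁'))| ≤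
      16 * L₂ * ε * Real.sqrt d / n := by
  classical
  set i0 : Fin n := ⟨0, hn⟩ with hi0
  set E : ℝ := ε * Real.sqrt d with hEdef
  have hE0 : 0 ≤ E := by positivity
  set X' := Function.update X i0 x₁' with hX'def
  set Y' := Function.update Y i0 y₁' with hY'def
  set Yt' := Function.update Yt i0 yt₁' with hYt'def
  -- membership for updated families
  have eX' : ∀ i, X' i = if i = i0 then x₁' else X i := fun i => by
    rw [hX'def, Function.update_apply]
  have eY' : ∀ i, Y' i = if i = i0 then y₁' else Y i := fun i => by
    rw [hY'def, Function.update_apply]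
  have eYt' : ∀ i, Yt' i = if i = i0 then yt₁' else Yt i := fun i => by
    rw [hYt'def, Function.update_apply]
  have hX' : ∀ i, X' i ∈ Xset := fun i => by
    rw [eX' i]; split <;> [exact hx₁'; exact hX i]
  have hY' : ∀ i, Y' i ∈ Xset := fun i => by
    rw [eY' i]; split <;> [exact hy₁'; exact hY i]
  have hYt' : ∀ i, Yt' i ∈ Xset := fun i => by
    rw [eYt' i]; split <;> [exact hyt₁'; exact hYt i]
  -- norm bounds
  have hnorm : ∀ i, ‖Yt i - Y i‖ ≤ E := fun i => by
    apply coord_norm_le _ _ hε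
    intro t; simpa [PiLp.sub_apply] using hpert i t
  have hnorm' : ∀ i, ‖Yt' i - Y' i‖ ≤ E := fun i => by
    rcases eq_or_ne i i0 with h | h
    · rw [eYt' i, eY' i, if_pos h, if_pos h]
      apply coord_norm_le _ _ hε
      intro t; simpa [PiLp.sub_apply] using hpert' t
    · rw [eYt' i, eY' i, if_neg h, if_neg h]
      apply coord_norm_le _ _ hε
      intro t; simpa [PiLp.sub_apply] using hpert i t
  -- per-pair difference functions
  set g : Fin n → Fin n → ℝ := fun i j =>
    Hker k (X i) (X j) (Yt i) (Yt j) - Hker k (X i) (X j) (Y i) (Y j) with hg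
  set g' : Fin n → Fin n → ℝ := fun i j =>
    Hker k (X' i) (X' j) (Yt' i) (Yt' j) - Hker k (X' i) (X' j) (Y' i) (Y' j) with hg'
  have hgb : ∀ i j, |g i j| ≤ 4 * L₂ * E := fun i j =>
    Hker_diff_bound Xset k L₂ E hL₂ hlip (hX i) (hX j) (hY i) (hY j) (hYt i) (hYt j)
      (hnorm i) (hnorm j)
  have hgb' : ∀ i j, |g' i j| ≤ 4 * L₂ * E := fun i j =>
    Hker_diff_bound Xset k L₂ E hL₂ hlip (hX' i) (hX' j) (hY' i) (hY' j) (hYt' i) (hYt' j)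
      (hnorm' i) (hnorm' j)
  set T : Fin n → Fin n → ℝ := fun i j => if i = j then (0 : ℝ) else g i j - g' i j with hT
  have hTb : ∀ i j, |T i j| ≤ 8 * L₂ * E := by
    intro i j
    rw [hT]
    rcases eq_or_ne i j with h | h
    · simp [h]; positivity
    · simp only [if_neg h]
      calc |g i j - g' i j| ≤ |g i j| + |g' i j| := abs_sub _ _
        _ ≤ 4 * L₂ * E + 4 * L₂ * E := add_le_add (hgb i j) (hgb' i j)
        _ = 8 * L₂ * E := by ring
  have hT0 : ∀ i j, i ≠ i0 → j ≠ i0 → T i j = 0 := by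
    intro i j hi hj
    rw [hT]
    rcases eq_or_ne i j with h | h
    · simp [h]
    · simp only [if_neg h, hg, hg', eX' i, eX' j, eY' i, eY' j, eYt' i, eYt' j,
        if_neg hi, if_neg hj]
      ring
  set c : ℝ := 1 / ((n : ℝ) * ((n : ℝ) - 1)) with hc
  -- rewrite the goal as c * S
  have hsumsub : ∀ (F G : Fin n → Fin n → ℝ),
      ((∑ i, ∑ j, if i = j then (0:ℝ) else F i j) -
        ∑ i, ∑ j, if i = j then (0:ℝ) else G i j)
      = ∑ i, ∑ j, if i = j then (0:ℝ) else F i j - G i j := by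
    intro F G
    rw [← Finset.sum_sub_distrib]
    refine Finset.sum_congr rfl fun i _ => ?_
    rw [← Finset.sum_sub_distrib]
    refine Finset.sum_congr rfl fun j _ => ?_
    split <;> simp
  have key : (MMDhat n k X Yt - MMDhat n k X Y) -
      (MMDhat n k X' Yt' - MMDhat n k X' Y') = c * ∑ i, ∑ j, T i j := by
    unfold MMDhat
    rw [← hc, ← mul_sub, ← mul_sub, ← mul_sub, hsumsub, hsumsub, hsumsub]
  rw [key]
  -- bound the sum
  have hS1 : |∑ j, T i0 j| ≤ (n - 1 : ℝ) * (8 * L₂ * E) := by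
    calc |∑ j, T i0 j| ≤ ∑ j, |T i0 j| := Finset.abs_sum_le_sum_abs _ _
      _ = ∑ j ∈ Finset.univ.erase i0, |T i0 j| := by
          rw [← Finset.add_sum_erase _ _ (Finset.mem_univ i0)]
          simp [hT]
      _ ≤ ∑ _j ∈ Finset.univ.erase i0, 8 * L₂ * E :=
          Finset.sum_le_sum fun j _ => hTb i0 j
      _ = (n - 1 : ℝ) * (8 * L₂ * E) := by
          rw [Finset.sum_const, Finset.card_erase_of_mem (Finset.mem_univ i0),
            Finset.card_univ, Fintype.card_fin, nsmul_eq_mul]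
          congr 1
          rw [Nat.cast_sub hn]
          simp
  have hS2 : |∑ i ∈ Finset.univ.erase i0, ∑ j, T i j| ≤ (n - 1 : ℝ) * (8 * L₂ * E) := by
    calc |∑ i ∈ Finset.univ.erase i0, ∑ j, T i j|
        ≤ ∑ i ∈ Finset.univ.erase i0, |∑ j, T i j| := Finset.abs_sum_le_sum_abs _ _
      _ ≤ ∑ _i ∈ Finset.univ.erase i0, 8 * L₂ * E := by
          refine Finset.sum_le_sum fun i hi => ?_
          have hi' : i ≠ i0 := Finset.ne_of_mem_erase hi
          have : ∑ j, T i j = T i i0 := by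
            refine Finset.sum_eq_single i0 (fun j _ hj => hT0 i j hi' hj) (by simp)
          rw [this]; exact hTb i i0
      _ = (n - 1 : ℝ) * (8 * L₂ * E) := by
          rw [Finset.sum_const, Finset.card_erase_of_mem (Finset.mem_univ i0),
            Finset.card_univ, Fintype.card_fin, nsmul_eq_mul]
          congr 1
          rw [Nat.cast_sub hn]
          simp
  have hSsplit : ∑ i, ∑ j, T i j = (∑ j, T i0 j) + ∑ i ∈ Finset.univ.erase i0, ∑ j, T i j :=
    (Finset.add_sum_erase _ _ (Finset.mem_univ i0)).symm
  have hSb : |∑ i, ∑ j, T i j| ≤ 2 * (n - 1 : ℝ) * (8 * L₂ * E) := by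
    rw [hSsplit]
    calc |(∑ j, T i0 j) + ∑ i ∈ Finset.univ.erase i0, ∑ j, T i j|
        ≤ |∑ j, T i0 j| + |∑ i ∈ Finset.univ.erase i0, ∑ j, T i j| := abs_add_le _ _
      _ ≤ (n - 1 : ℝ) * (8 * L₂ * E) + (n - 1 : ℝ) * (8 * L₂ * E) := add_le_add hS1 hS2
      _ = 2 * (n - 1 : ℝ) * (8 * L₂ * E) := by ring
  have hc0 : 0 ≤ c := by
    rw [hc]
    rcases Nat.lt_or_ge n 2 with h | h
    · interval_cases n
      · norm_num
    · apply le_of_lt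
      apply div_pos one_pos
      have : (2 : ℝ) ≤ (n : ℝ) := by exact_mod_cast h
      nlinarith
  rw [abs_mul, abs_of_nonneg hc0]
  calc c * |∑ i, ∑ j, T i j| ≤ c * (2 * (n - 1 : ℝ) * (8 * L₂ * E)) :=
        mul_le_mul_of_nonneg_left hSb hc0
    _ ≤ 16 * L₂ * ε * Real.sqrt d / n := by
        rw [hc, hEdef]
        rcases Nat.lt_or_ge n 2 with h | h
        · interval_cases n
          · norm_num
            positivity
        · have h2 : (2 : ℝ) ≤ (n : ℝ) := by exact_mod_cast h
          have hn1 : (0 : ℝ) < (n : ℝ) - 1 := by linarith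
          have hnp : (0 : ℝ) < (n : ℝ) := by linarith
          rw [div_mul_eq_mul_div, one_mul, div_le_div_iff₀ (by positivity) hnp]
          have : 2 * ((n : ℝ) - 1) * (8 * L₂ * (ε * Real.sqrt d)) * (n : ℝ)
              = 16 * L₂ * ε * Real.sqrt d * ((n:ℝ) * ((n:ℝ) - 1)) := by ring
          rw [this]


end
end

section
/- Let k: X×X→ℝ with X ⊆ ℝ^d satisfy sup_{x,y∈X} |k(x,y)| ≤ ν and |k(x,y) − k(x',y')| ≤ L₂(‖x−x'‖ + ‖y−y'‖) for the Euclidean norm. Let S_P = {x_i}_{i=1}^n, S_Q = {y_i}_{i=1}^n and S̃_Q = {ỹ_i}_{i=1}^n with ‖ỹ_i − y_i‖_∞ ≤ ε for all i, and let S_P', S_Q', S̃_Q' be obtained by replacing (x₁, y₁, ỹ₁) with any triple (x₁', y₁', ỹ₁') with ‖ỹ₁' − y₁'‖_∞ ≤ ε. Then | [σ̂²_{H1,λ}(S_P, S̃_Q; k) − σ̂²_{H1,λ}(S_P, S_Q; k)] − [σ̂²_{H1,λ}(S_P', S̃_Q'; k) − σ̂²_{H1,λ}(S_P', S_Q'; k)]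 | ≤ 2048 ν L₂ ε √d / n. -/
noncomputable section

/-- The regularized variance estimator
`σ̂²_{H1,λ}(S_P,S_Q;k) = (4/n³) ∑_i (∑_j H_ij)² − (4/n⁴)(∑_i ∑_j H_ij)² + λ`. -/
def sigmaHat2 {d : ℕ} (n : ℕ) (lam : ℝ)
    (k : EuclideanSpace ℝ (Fin d) → EuclideanSpace ℝ (Fin d) → ℝ)
    (X Y : Fin n → EuclideanSpace ℝ (Fin d)) : ℝ :=
  (4 / (n : ℝ) ^ 3) * ∑ i, (∑ j, Hker k (X i) (X j) (Y i) (Y j)) ^ 2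
    - (4 / (n : ℝ) ^ 4) * (∑ i, ∑ j, Hker k (X i) (X j) (Y i) (Y j)) ^ 2 + lam

open Finset

section Aux

lemma sum_abs_le' {n : ℕ} (f : Fin n → ℝ) (C : ℝ) (h : ∀ i, |f i| ≤ C) :
    |∑ i, f i| ≤ n * C := by
  calc |∑ i, f i| ≤ ∑ i, |f i| := Finset.abs_sum_le_sum_abs _ _
    _ ≤ ∑ _i : Fin n, C := Finset.sum_le_sum (fun i _ => h i)
    _ = n * C := by simp [mul_comm]

lemma sum_abs_le_split' {n : ℕ} (i0 : Fin n) (f : Fin n → ℝ) (C C0 : ℝ) (hC : 0 ≤ C)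
    (h : ∀ i, i ≠ i0 → |f i| ≤ C) (h0 : |f i0| ≤ C0) :
    |∑ i, f i| ≤ n * C + C0 := by
  rw [← Finset.sum_erase_add _ _ (mem_univ i0)]
  calc |∑ i ∈ univ.erase i0, f i + f i0| ≤ |∑ i ∈ univ.erase i0, f i| + |f i0| := abs_add_le _ _
    _ ≤ (↑(univ.erase i0).card) * C + C0 := by
        gcongr
        calc |∑ i ∈ univ.erase i0, f i| ≤ ∑ i ∈ univ.erase i0, |f i| :=
              Finset.abs_sum_le_sum_abs _ _
          _ ≤ ∑ _i ∈ univ.erase i0, C := Finset.sum_le_sum (fun i hi => h i (Finset.mem_erase.1 hi).1)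
          _ = (↑(univ.erase i0).card) * C := by simp [mul_comm]
    _ ≤ n * C + C0 := by
        gcongr
        · exact_mod_cast Finset.card_le_card (Finset.subset_univ _) |>.trans_eq (by simp)

lemma quad_bound' (p q r s : ℝ) (Bpq Bsum Brs Bdsum : ℝ)
    (h1 : |(p-q)-(r-s)| ≤ Bpq) (h2 : |p+q| ≤ Bsum) (h3 : |r-s| ≤ Brs)
    (h4 : |(p+q)-(r+s)| ≤ Bdsum) :
    |p^2 - q^2 - (r^2 - s^2)| ≤ Bpq * Bsum + Brs * Bdsum := by
  have hid : p^2 - q^2 - (r^2 - s^2)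
      = ((p-q)-(r-s))*(p+q) + (r-s)*((p+q)-(r+s)) := by ring
  rw [hid]
  calc |((p-q)-(r-s))*(p+q) + (r-s)*((p+q)-(r+s))|
      ≤ |((p-q)-(r-s))*(p+q)| + |(r-s)*((p+q)-(r+s))| := abs_add_le _ _
    _ = |(p-q)-(r-s)| * |p+q| + |r-s| * |(p+q)-(r+s)| := by rw [abs_mul, abs_mul]
    _ ≤ Bpq * Bsum + Brs * Bdsum := by
        gcongr <;> first | positivity | exact (abs_nonneg _).trans h1 | exact (abs_nonneg _).trans h3

lemma aux_vec (n : ℕ) (hn : 0 < n) (ν D : ℝ) (hν : 0 ≤ ν) (hD : 0 ≤ D)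
    (a b a' b' : Fin n → ℝ)
    (ha : ∀ i, |a i| ≤ 4*ν*n) (hb : ∀ i, |b i| ≤ 4*ν*n)
    (ha' : ∀ i, |a' i| ≤ 4*ν*n) (hb' : ∀ i, |b' i| ≤ 4*ν*n)
    (hd : ∀ i, |a i - b i| ≤ 4*D*n) (hd' : ∀ i, |a' i - b' i| ≤ 4*D*n)
    (hdd : ∀ i, i ≠ ⟨0,hn⟩ → |(a i - b i) - (a' i - b' i)| ≤ 8*D)
    (hss : ∀ i, i ≠ ⟨0,hn⟩ → |(a i + b i) - (a' i + b' i)| ≤ 16*ν) :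
    |(4/(n:ℝ)^3) * ∑ i, (a i)^2 - (4/(n:ℝ)^4) * (∑ i, a i)^2
      - ((4/(n:ℝ)^3) * ∑ i, (b i)^2 - (4/(n:ℝ)^4) * (∑ i, b i)^2)
      - ((4/(n:ℝ)^3) * ∑ i, (a' i)^2 - (4/(n:ℝ)^4) * (∑ i, a' i)^2
      - ((4/(n:ℝ)^3) * ∑ i, (b' i)^2 - (4/(n:ℝ)^4) * (∑ i, b' i)^2))|
    ≤ 1792 * ν * D / n := by
  have hN : (0:ℝ) < n := Nat.cast_pos.2 hn
  set N : ℝ := (n:ℝ) with hNdef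
  have habsum : ∀ i, |a i + b i| ≤ 8*ν*N := fun i => by
    calc |a i + b i| ≤ |a i| + |b i| := abs_add_le _ _
      _ ≤ 4*ν*N + 4*ν*N := add_le_add (ha i) (hb i)
      _ = 8*ν*N := by ring
  have habsum' : ∀ i, |a' i + b' i| ≤ 8*ν*N := fun i => by
    calc |a' i + b' i| ≤ |a' i| + |b' i| := abs_add_le _ _
      _ ≤ 4*ν*N + 4*ν*N := add_le_add (ha' i) (hb' i)
      _ = 8*ν*N := by ring
  have hP : |∑ i, ((a i)^2 - (b i)^2 - ((a' i)^2 - (b' i)^2))| ≤ 192*ν*D*N^2 := by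
    have := sum_abs_le_split' (⟨0,hn⟩ : Fin n)
      (fun i => (a i)^2 - (b i)^2 - ((a' i)^2 - (b' i)^2)) (128*ν*D*N) (64*ν*D*N^2)
      (by positivity)
      (fun i hi => by
        calc |(a i)^2 - (b i)^2 - ((a' i)^2 - (b' i)^2)|
            ≤ (8*D) * (8*ν*N) + (4*D*N) * (16*ν) :=
              quad_bound' _ _ _ _ _ _ _ _ (hdd i hi) (habsum i) (hd' i) (hss i hi)
          _ = 128*ν*D*N := by ring)
      (by
        set i0 : Fin n := ⟨0,hn⟩
        calc |(a i0)^2 - (b i0)^2 - ((a' i0)^2 - (b' i0)^2)|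
            ≤ |(a i0)^2 - (b i0)^2| + |(a' i0)^2 - (b' i0)^2| := abs_sub _ _
          _ ≤ (4*D*N)*(8*ν*N) + (4*D*N)*(8*ν*N) := by
              have e1 : (a i0)^2 - (b i0)^2 = (a i0 - b i0) * (a i0 + b i0) := by ring
              have e2 : (a' i0)^2 - (b' i0)^2 = (a' i0 - b' i0) * (a' i0 + b' i0) := by ring
              rw [e1, e2, abs_mul, abs_mul]
              gcongr <;>
                first | exact abs_nonneg _ | exact hd i0 | exact hd' i0 | exact habsum i0 | exact habsum' i0
          _ = 64*ν*D*N^2 := by ring)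
    calc |∑ i, ((a i)^2 - (b i)^2 - ((a' i)^2 - (b' i)^2))|
        ≤ N * (128*ν*D*N) + 64*ν*D*N^2 := this
      _ = 192*ν*D*N^2 := by ring
  have hT1 : |(∑ i, a i) - (∑ i, b i) - ((∑ i, a' i) - (∑ i, b' i))| ≤ 16*D*N := by
    have he : (∑ i, a i) - (∑ i, b i) - ((∑ i, a' i) - (∑ i, b' i))
        = ∑ i, ((a i - b i) - (a' i - b' i)) := by
      simp [Finset.sum_sub_distrib]
    rw [he]
    have := sum_abs_le_split' (⟨0,hn⟩ : Fin n)
      (fun i => (a i - b i) - (a' i - b' i)) (8*D) (8*D*N) (by positivity)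
      (fun i hi => hdd i hi)
      (by
        calc |(a ⟨0,hn⟩ - b ⟨0,hn⟩) - (a' ⟨0,hn⟩ - b' ⟨0,hn⟩)|
            ≤ |a ⟨0,hn⟩ - b ⟨0,hn⟩| + |a' ⟨0,hn⟩ - b' ⟨0,hn⟩| := abs_sub _ _
          _ ≤ 4*D*N + 4*D*N := add_le_add (hd _) (hd' _)
          _ = 8*D*N := by ring)
    calc |∑ i, ((a i - b i) - (a' i - b' i))| ≤ N * (8*D) + 8*D*N := this
      _ = 16*D*N := by ring
  have hT2 : |(∑ i, a i) + (∑ i, b i)| ≤ 8*ν*N^2 := by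
    have he : (∑ i, a i) + (∑ i, b i) = ∑ i, (a i + b i) := by
      simp [Finset.sum_add_distrib]
    rw [he]
    calc |∑ i, (a i + b i)| ≤ N * (8*ν*N) := sum_abs_le' _ _ habsum
      _ = 8*ν*N^2 := by ring
  have hT3 : |(∑ i, a' i) - (∑ i, b' i)| ≤ 4*D*N^2 := by
    have he : (∑ i, a' i) - (∑ i, b' i) = ∑ i, (a' i - b' i) := by
      simp [Finset.sum_sub_distrib]
    rw [he]
    calc |∑ i, (a' i - b' i)| ≤ N * (4*D*N) := sum_abs_le' _ _ hd'
      _ = 4*D*N^2 := by ring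
  have hT4 : |((∑ i, a i) + (∑ i, b i)) - ((∑ i, a' i) + (∑ i, b' i))| ≤ 32*ν*N := by
    have he : ((∑ i, a i) + (∑ i, b i)) - ((∑ i, a' i) + (∑ i, b' i))
        = ∑ i, ((a i + b i) - (a' i + b' i)) := by
      simp [Finset.sum_add_distrib, Finset.sum_sub_distrib]
    rw [he]
    have := sum_abs_le_split' (⟨0,hn⟩ : Fin n)
      (fun i => (a i + b i) - (a' i + b' i)) (16*ν) (16*ν*N) (by positivity)
      (fun i hi => hss i hi)
      (by
        calc |(a ⟨0,hn⟩ + b ⟨0,hn⟩) - (a' ⟨0,hn⟩ + b' ⟨0,hn⟩)|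
            ≤ |a ⟨0,hn⟩ + b ⟨0,hn⟩| + |a' ⟨0,hn⟩ + b' ⟨0,hn⟩| := abs_sub _ _
          _ ≤ 8*ν*N + 8*ν*N := add_le_add (habsum _) (habsum' _)
          _ = 16*ν*N := by ring)
    calc |∑ i, ((a i + b i) - (a' i + b' i))| ≤ N * (16*ν) + 16*ν*N := this
      _ = 32*ν*N := by ring
  have hR : |(∑ i, a i)^2 - (∑ i, b i)^2 - ((∑ i, a' i)^2 - (∑ i, b' i)^2)|
      ≤ 256*ν*D*N^3 := by
    calc |(∑ i, a i)^2 - (∑ i, b i)^2 - ((∑ i, a' i)^2 - (∑ i, b' i)^2)|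
        ≤ (16*D*N) * (8*ν*N^2) + (4*D*N^2) * (32*ν*N) :=
          quad_bound' _ _ _ _ _ _ _ _ hT1 hT2 hT3 hT4
      _ = 256*ν*D*N^3 := by ring
  have hsplit : (4/N^3) * ∑ i, (a i)^2 - (4/N^4) * (∑ i, a i)^2
      - ((4/N^3) * ∑ i, (b i)^2 - (4/N^4) * (∑ i, b i)^2)
      - ((4/N^3) * ∑ i, (a' i)^2 - (4/N^4) * (∑ i, a' i)^2
      - ((4/N^3) * ∑ i, (b' i)^2 - (4/N^4) * (∑ i, b' i)^2))
      = (4/N^3) * (∑ i, ((a i)^2 - (b i)^2 - ((a' i)^2 - (b' i)^2)))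
        - (4/N^4) * ((∑ i, a i)^2 - (∑ i, b i)^2 - ((∑ i, a' i)^2 - (∑ i, b' i)^2)) := by
    simp only [Finset.sum_sub_distrib]
    ring
  rw [hsplit]
  calc |(4/N^3) * (∑ i, ((a i)^2 - (b i)^2 - ((a' i)^2 - (b' i)^2)))
        - (4/N^4) * ((∑ i, a i)^2 - (∑ i, b i)^2 - ((∑ i, a' i)^2 - (∑ i, b' i)^2))|
      ≤ |(4/N^3) * (∑ i, ((a i)^2 - (b i)^2 - ((a' i)^2 - (b' i)^2)))|
        + |(4/N^4) * ((∑ i, a i)^2 - (∑ i, b i)^2 - ((∑ i, a' i)^2 - (∑ i, b' i)^2))| :=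
        abs_sub _ _
    _ ≤ (4/N^3) * (192*ν*D*N^2) + (4/N^4) * (256*ν*D*N^3) := by
        rw [abs_mul, abs_mul, abs_of_pos (by positivity : (0:ℝ) < 4/N^3),
          abs_of_pos (by positivity : (0:ℝ) < 4/N^4)]
        gcongr
    _ = 1792 * ν * D / N := by field_simp; ring

lemma aux_mat (n : ℕ) (hn : 0 < n) (ν D : ℝ) (hν : 0 ≤ ν) (hD : 0 ≤ D)
    (Ha Hb Ha' Hb' : Fin n → Fin n → ℝ)
    (hA : ∀ i j, |Ha i j| ≤ 4*ν) (hB : ∀ i j, |Hb i j| ≤ 4*ν)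
    (hA' : ∀ i j, |Ha' i j| ≤ 4*ν) (hB' : ∀ i j, |Hb' i j| ≤ 4*ν)
    (hAB : ∀ i j, |Ha i j - Hb i j| ≤ 4*D)
    (hAB' : ∀ i j, |Ha' i j - Hb' i j| ≤ 4*D)
    (heqA : ∀ i j, i ≠ ⟨0,hn⟩ → j ≠ ⟨0,hn⟩ → Ha' i j = Ha i j)
    (heqB : ∀ i j, i ≠ ⟨0,hn⟩ → j ≠ ⟨0,hn⟩ → Hb' i j = Hb i j) :
    |(4/(n:ℝ)^3) * ∑ i, (∑ j, Ha i j)^2 - (4/(n:ℝ)^4) * (∑ i, ∑ j, Ha i j)^2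
      - ((4/(n:ℝ)^3) * ∑ i, (∑ j, Hb i j)^2 - (4/(n:ℝ)^4) * (∑ i, ∑ j, Hb i j)^2)
      - ((4/(n:ℝ)^3) * ∑ i, (∑ j, Ha' i j)^2 - (4/(n:ℝ)^4) * (∑ i, ∑ j, Ha' i j)^2
      - ((4/(n:ℝ)^3) * ∑ i, (∑ j, Hb' i j)^2 - (4/(n:ℝ)^4) * (∑ i, ∑ j, Hb' i j)^2))|
    ≤ 1792 * ν * D / n := by
  have rowbd : ∀ (M : Fin n → Fin n → ℝ), (∀ i j, |M i j| ≤ 4*ν) →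
      ∀ i, |∑ j, M i j| ≤ 4*ν*n := fun M hM i => by
    calc |∑ j, M i j| ≤ ∑ j, |M i j| := Finset.abs_sum_le_sum_abs _ _
      _ ≤ ∑ _j : Fin n, 4*ν := Finset.sum_le_sum (fun j _ => hM i j)
      _ = 4*ν*n := by simp [mul_comm]
  have rowdiff : ∀ (M M' : Fin n → Fin n → ℝ), (∀ i j, |M i j - M' i j| ≤ 4*D) →
      ∀ i, |(∑ j, M i j) - (∑ j, M' i j)| ≤ 4*D*n := fun M M' hM i => by
    rw [← Finset.sum_sub_distrib]
    calc |∑ j, (M i j - M' i j)| ≤ ∑ j, |M i j - M' i j| := Finset.abs_sum_le_sum_abs _ _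
      _ ≤ ∑ _j : Fin n, 4*D := Finset.sum_le_sum (fun j _ => hM i j)
      _ = 4*D*n := by simp [mul_comm]
  refine aux_vec n hn ν D hν hD
    (fun i => ∑ j, Ha i j) (fun i => ∑ j, Hb i j)
    (fun i => ∑ j, Ha' i j) (fun i => ∑ j, Hb' i j)
    (rowbd Ha hA) (rowbd Hb hB) (rowbd Ha' hA') (rowbd Hb' hB')
    (rowdiff Ha Hb hAB) (rowdiff Ha' Hb' hAB') ?_ ?_
  · intro i hi
    have he : ((∑ j, Ha i j) - (∑ j, Hb i j)) - ((∑ j, Ha' i j) - (∑ j, Hb' i j))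
        = ∑ j, ((Ha i j - Hb i j) - (Ha' i j - Hb' i j)) := by
      simp [Finset.sum_sub_distrib]
    rw [he, Finset.sum_eq_single_of_mem (⟨0,hn⟩ : Fin n) (mem_univ _)
      (fun j _ hj => by rw [heqA i j hi hj, heqB i j hi hj]; ring)]
    calc |(Ha i ⟨0,hn⟩ - Hb i ⟨0,hn⟩) - (Ha' i ⟨0,hn⟩ - Hb' i ⟨0,hn⟩)|
        ≤ |Ha i ⟨0,hn⟩ - Hb i ⟨0,hn⟩| + |Ha' i ⟨0,hn⟩ - Hb' i ⟨0,hn⟩| := abs_sub _ _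
      _ ≤ 4*D + 4*D := add_le_add (hAB i _) (hAB' i _)
      _ = 8*D := by ring
  · intro i hi
    have he : ((∑ j, Ha i j) + (∑ j, Hb i j)) - ((∑ j, Ha' i j) + (∑ j, Hb' i j))
        = ∑ j, ((Ha i j + Hb i j) - (Ha' i j + Hb' i j)) := by
      simp [Finset.sum_add_distrib, Finset.sum_sub_distrib]
    rw [he, Finset.sum_eq_single_of_mem (⟨0,hn⟩ : Fin n) (mem_univ _)
      (fun j _ hj => by rw [heqA i j hi hj, heqB i j hi hj]; ring)]
    calc |(Ha i ⟨0,hn⟩ + Hb i ⟨0,hn⟩) - (Ha' i ⟨0,hn⟩ + Hb' i ⟨0,hn⟩)|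
        ≤ |Ha i ⟨0,hn⟩ + Hb i ⟨0,hn⟩| + |Ha' i ⟨0,hn⟩ + Hb' i ⟨0,hn⟩| := abs_sub _ _
      _ ≤ (|Ha i ⟨0,hn⟩| + |Hb i ⟨0,hn⟩|) + (|Ha' i ⟨0,hn⟩| + |Hb' i ⟨0,hn⟩|) :=
          add_le_add (abs_add_le _ _) (abs_add_le _ _)
      _ ≤ (4*ν + 4*ν) + (4*ν + 4*ν) := by
          gcongr <;> first | exact hA i _ | exact hB i _ | exact hA' i _ | exact hB' i _
      _ = 16*ν := by ring

lemma eucl_norm_le' {d : ℕ} (v w : EuclideanSpace ℝ (Fin d)) (ε : ℝ) (hε : 0 ≤ ε)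
    (h : ∀ t, |v t - w t| ≤ ε) : ‖v - w‖ ≤ ε * Real.sqrt d := by
  rw [EuclideanSpace.norm_eq]
  have hb : ∑ t, ‖(v - w) t‖^2 ≤ (d:ℝ) * ε^2 := by
    calc ∑ t, ‖(v - w) t‖^2 ≤ ∑ _t : Fin d, ε^2 := by
          refine Finset.sum_le_sum (fun t _ => ?_)
          have hvw : ‖(v - w) t‖ = |v t - w t| := by
            simp [PiLp.sub_apply, Real.norm_eq_abs]
          rw [hvw]
          exact pow_le_pow_left₀ (abs_nonneg _) (h t) 2
      _ = (d:ℝ) * ε^2 := by simp [mul_comm]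
  calc Real.sqrt (∑ t, ‖(v - w) t‖^2) ≤ Real.sqrt ((d:ℝ) * ε^2) := Real.sqrt_le_sqrt hb
    _ = ε * Real.sqrt d := by
        rw [Real.sqrt_mul (Nat.cast_nonneg d), Real.sqrt_sq hε]; ring

end Aux

/-- bounded differences of the adversarial variance-estimator error:
replacing the first sample triple `(x₁, y₁, ỹ₁)` by any other admissible triple changes
`σ̂²_{H1,λ}(S_P, S̃_Q; k) − σ̂²_{H1,λ}(S_P, S_Q; k)` by at most `2048 ν L₂ ε √d / n`. -/
theorem statement7 {d : ℕ} (Xset : Set (EuclideanSpace ℝ (Fin d)))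
    (k : EuclideanSpace ℝ (Fin d) → EuclideanSpace ℝ (Fin d) → ℝ)
    (ν L₂ ε lam : ℝ) (hν : 0 < ν) (hL₂ : 0 < L₂) (hε : 0 ≤ ε) (hlam : 0 < lam)
    (hbound : ∀ x ∈ Xset, ∀ y ∈ Xset, |k x y| ≤ ν)
    (hlip : ∀ x ∈ Xset, ∀ y ∈ Xset, ∀ x' ∈ Xset, ∀ y' ∈ Xset,
      |k x y - k x' y'| ≤ L₂ * (‖x - x'‖ + ‖y - y'‖))
    (n : ℕ) (hn : 0 < n)
    (X Y Yt : Fin n → EuclideanSpace ℝ (Fin d))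
    (hX : ∀ i, X i ∈ Xset) (hY : ∀ i, Y i ∈ Xset) (hYt : ∀ i, Yt i ∈ Xset)
    (hpert : ∀ i, ∀ t : Fin d, |Yt i t - Y i t| ≤ ε)
    (x₁' y₁' yt₁' : EuclideanSpace ℝ (Fin d))
    (hx₁' : x₁' ∈ Xset) (hy₁' : y₁' ∈ Xset) (hyt₁' : yt₁' ∈ Xset)
    (hpert' : ∀ t : Fin d, |yt₁' t - y₁' t| ≤ ε) :
    |(sigmaHat2 n lam k X Yt - sigmaHat2 n lam k X Y) -
        (sigmaHat2 n lam k (Function.update X ⟨0, hn⟩ x₁') (Function.update Yt ⟨0, hn⟩ yt₁') -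
          sigmaHat2 n lam k (Function.update X ⟨0, hn⟩ x₁') (Function.update Y ⟨0, hn⟩ y₁'))| ≤
      2048 * ν * L₂ * ε * Real.sqrt d / n := by
  set i0 : Fin n := ⟨0, hn⟩ with hi0
  set X' := Function.update X i0 x₁' with hX'def
  set Y' := Function.update Y i0 y₁' with hY'def
  set Yt' := Function.update Yt i0 yt₁' with hYt'def
  set E : ℝ := ε * Real.sqrt d with hEdef
  have hEpos : 0 ≤ E := by positivity
  set D : ℝ := L₂ * E with hDdef
  have hDpos : 0 ≤ D := by positivity
  -- membership of updated families
  have hX' : ∀ i, X' i ∈ Xset := fun i => by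
    rcases eq_or_ne i i0 with h | h
    · subst h; simpa [hX'def] using hx₁'
    · rw [hX'def, Function.update_of_ne h]; exact hX i
  have hY' : ∀ i, Y' i ∈ Xset := fun i => by
    rcases eq_or_ne i i0 with h | h
    · subst h; simpa [hY'def] using hy₁'
    · rw [hY'def, Function.update_of_ne h]; exact hY i
  have hYt' : ∀ i, Yt' i ∈ Xset := fun i => by
    rcases eq_or_ne i i0 with h | h
    · subst h; simpa [hYt'def] using hyt₁'
    · rw [hYt'def, Function.update_of_ne h]; exact hYt i
  -- norm bounds on perturbations
  have hnYt : ∀ i, ‖Yt i - Y i‖ ≤ E := fun i => eucl_norm_le' _ _ ε hε (hpert i)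
  have hnYt' : ∀ i, ‖Yt' i - Y' i‖ ≤ E := fun i => by
    rcases eq_or_ne i i0 with h | h
    · subst h
      rw [hYt'def, hY'def]
      simpa using eucl_norm_le' yt₁' y₁' ε hε hpert'
    · rw [hYt'def, hY'def, Function.update_of_ne h, Function.update_of_ne h]
      exact hnYt i
  -- pointwise kernel-matrix bounds
  have Hbd : ∀ x ∈ Xset, ∀ x' ∈ Xset, ∀ y ∈ Xset, ∀ y' ∈ Xset,
      |Hker k x x' y y'| ≤ 4 * ν := by
    intro x hx x' hx' y hy y' hy'
    have h1 := abs_le.1 (hbound x hx x' hx')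
    have h2 := abs_le.1 (hbound y hy y' hy')
    have h3 := abs_le.1 (hbound x hx y' hy')
    have h4 := abs_le.1 (hbound x' hx' y hy)
    rw [Hker, abs_le]
    constructor <;> [linarith; linarith]
  have Hdiff : ∀ x ∈ Xset, ∀ x' ∈ Xset, ∀ yt ∈ Xset, ∀ yt' ∈ Xset, ∀ y ∈ Xset, ∀ y' ∈ Xset,
      ‖yt - y‖ ≤ E → ‖yt' - y'‖ ≤ E →
      |Hker k x x' yt yt' - Hker k x x' y y'| ≤ 4 * D := by
    intro x hx x' hx' yt hyt1 yt' hyt1' y hy1 y' hy1' hn1 hn2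
    have e1 : |k yt yt' - k y y'| ≤ 2 * (L₂ * E) := by
      calc |k yt yt' - k y y'| ≤ L₂ * (‖yt - y‖ + ‖yt' - y'‖) :=
            hlip yt hyt1 yt' hyt1' y hy1 y' hy1'
        _ ≤ L₂ * (E + E) := by gcongr
        _ = 2 * (L₂ * E) := by ring
    have e2 : |k x yt' - k x y'| ≤ L₂ * E := by
      calc |k x yt' - k x y'| ≤ L₂ * (‖x - x‖ + ‖yt' - y'‖) :=
            hlip x hx yt' hyt1' x hx y' hy1'
        _ = L₂ * ‖yt' - y'‖ := by simp
        _ ≤ L₂ * E := by gcongr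
    have e3 : |k x' yt - k x' y| ≤ L₂ * E := by
      calc |k x' yt - k x' y| ≤ L₂ * (‖x' - x'‖ + ‖yt - y‖) :=
            hlip x' hx' yt hyt1 x' hx' y hy1
        _ = L₂ * ‖yt - y‖ := by simp
        _ ≤ L₂ * E := by gcongr
    have hid : Hker k x x' yt yt' - Hker k x x' y y'
        = (k yt yt' - k y y') - (k x yt' - k x y') - (k x' yt - k x' y) := by
      rw [Hker, Hker]; ring
    rw [hid, hDdef]
    have e1' := abs_le.1 e1
    have e2' := abs_le.1 e2
    have e3' := abs_le.1 e3
    rw [abs_le]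
    constructor <;> [linarith; linarith]
  -- assemble
  have key := aux_mat n hn ν D (le_of_lt hν) hDpos
    (fun i j => Hker k (X i) (X j) (Yt i) (Yt j))
    (fun i j => Hker k (X i) (X j) (Y i) (Y j))
    (fun i j => Hker k (X' i) (X' j) (Yt' i) (Yt' j))
    (fun i j => Hker k (X' i) (X' j) (Y' i) (Y' j))
    (fun i j => Hbd _ (hX i) _ (hX j) _ (hYt i) _ (hYt j))
    (fun i j => Hbd _ (hX i) _ (hX j) _ (hY i) _ (hY j))
    (fun i j => Hbd _ (hX' i) _ (hX' j) _ (hYt' i) _ (hYt' j))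
    (fun i j => Hbd _ (hX' i) _ (hX' j) _ (hY' i) _ (hY' j))
    (fun i j => Hdiff _ (hX i) _ (hX j) _ (hYt i) _ (hYt j) _ (hY i) _ (hY j)
      (hnYt i) (hnYt j))
    (fun i j => Hdiff _ (hX' i) _ (hX' j) _ (hYt' i) _ (hYt' j) _ (hY' i) _ (hY' j)
      (hnYt' i) (hnYt' j))
    (fun i j hi hj => by
      simp only [hX'def, hYt'def, Function.update_of_ne (show i ≠ i0 from hi),
        Function.update_of_ne (show j ≠ i0 from hj)])
    (fun i j hi hj => by
      simp only [hX'def, hY'def, Function.update_of_ne (show i ≠ i0 from hi),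
        Function.update_of_ne (show j ≠ i0 from hj)])
  have hEq : (sigmaHat2 n lam k X Yt - sigmaHat2 n lam k X Y) -
      (sigmaHat2 n lam k X' Yt' - sigmaHat2 n lam k X' Y')
      = (4/(n:ℝ)^3) * ∑ i, (∑ j, Hker k (X i) (X j) (Yt i) (Yt j))^2
          - (4/(n:ℝ)^4) * (∑ i, ∑ j, Hker k (X i) (X j) (Yt i) (Yt j))^2
        - ((4/(n:ℝ)^3) * ∑ i, (∑ j, Hker k (X i) (X j) (Y i) (Y j))^2
          - (4/(n:ℝ)^4) * (∑ i, ∑ j, Hker k (X i) (X j) (Y i) (Y j))^2)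
        - ((4/(n:ℝ)^3) * ∑ i, (∑ j, Hker k (X' i) (X' j) (Yt' i) (Yt' j))^2
          - (4/(n:ℝ)^4) * (∑ i, ∑ j, Hker k (X' i) (X' j) (Yt' i) (Yt' j))^2
        - ((4/(n:ℝ)^3) * ∑ i, (∑ j, Hker k (X' i) (X' j) (Y' i) (Y' j))^2
          - (4/(n:ℝ)^4) * (∑ i, ∑ j, Hker k (X' i) (X' j) (Y' i) (Y' j))^2)) := by
    simp only [sigmaHat2]
    ring
  rw [hEq]
  refine le_trans key ?_
  have hNpos : (0:ℝ) < n := Nat.cast_pos.2 hn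
  rw [div_le_div_iff₀ hNpos hNpos]
  have hsd : 0 ≤ ν * L₂ * ε * Real.sqrt d := by positivity
  have hexp : 1792 * ν * D = 1792 * (ν * L₂ * ε * Real.sqrt d) := by
    rw [hDdef, hEdef]; ring
  nlinarith [mul_pos hNpos hNpos, mul_nonneg hsd (le_of_lt hNpos)]

end
end

section
/- Let {k_θ}_{θ ∈ Θ} be a family of kernels on X ⊆ ℝ^d satisfying sup_{θ∈Θ} sup_{x,y∈X} |k_θ(x,y)| ≤ ν and |k_θ(x,y) − k_{θ'}(x,y)| ≤ L₁‖θ−θ'‖, and let {θ_i}_{i=1}^P ⊆ Θ be a q-net of Θ. Then for any samples S_P, S_Q and any adversarial set S̃_Q, the error function Δσ(θ) = σ̂²_{H1,λ}(S_P, S̃_Q; k_θ) − σ̂²_{H1,λ}(S_P, S_Q; k_θ) satisfies sup_{θ ∈ Θ} |Δσ(θ)| ≤ max_{1≤i≤P} |Δσ(θ_i)| + 512 L₁ ν q. -/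
noncomputable section

lemma sigma_diff {d : ℕ} (n : ℕ) (lam ν ε : ℝ) (hν : 0 ≤ ν) (hε : 0 ≤ ε)
    (k1 k2 : EuclideanSpace ℝ (Fin d) → EuclideanSpace ℝ (Fin d) → ℝ)
    (X Y : Fin n → EuclideanSpace ℝ (Fin d))
    (hb1 : ∀ i j, |Hker k1 (X i) (X j) (Y i) (Y j)| ≤ 4 * ν)
    (hb2 : ∀ i j, |Hker k2 (X i) (X j) (Y i) (Y j)| ≤ 4 * ν)
    (hd : ∀ i j, |Hker k1 (X i) (X j) (Y i) (Y j) - Hker k2 (X i) (X j) (Y i) (Y j)| ≤ 4 * ε) :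
    |sigmaHat2 n lam k1 X Y - sigmaHat2 n lam k2 X Y| ≤ 256 * ν * ε := by
  rcases Nat.eq_zero_or_pos n with h0 | hn
  · subst h0
    simp [sigmaHat2]
    positivity
  have hnpos : (0:ℝ) < n := by exact_mod_cast hn
  set A : Fin n → ℝ := fun i => ∑ j, Hker k1 (X i) (X j) (Y i) (Y j) with hAdef
  set B : Fin n → ℝ := fun i => ∑ j, Hker k2 (X i) (X j) (Y i) (Y j) with hBdef
  have hA : ∀ i, |A i| ≤ 4 * ν * n := by
    intro i
    calc |A i| ≤ ∑ j, |Hker k1 (X i) (X j) (Y i) (Y j)| := Finset.abs_sum_le_sum_abs _ _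
    _ ≤ ∑ _j : Fin n, 4 * ν := Finset.sum_le_sum fun j _ => hb1 i j
    _ = 4 * ν * n := by simp [mul_comm]
  have hB : ∀ i, |B i| ≤ 4 * ν * n := by
    intro i
    calc |B i| ≤ ∑ j, |Hker k2 (X i) (X j) (Y i) (Y j)| := Finset.abs_sum_le_sum_abs _ _
    _ ≤ ∑ _j : Fin n, 4 * ν := Finset.sum_le_sum fun j _ => hb2 i j
    _ = 4 * ν * n := by simp [mul_comm]
  have hABd : ∀ i, |A i - B i| ≤ 4 * ε * n := by
    intro i
    have : A i - B i = ∑ j, (Hker k1 (X i) (X j) (Y i) (Y j) - Hker k2 (X i) (X j) (Y i) (Y j)) := by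
      simp [hAdef, hBdef, Finset.sum_sub_distrib]
    rw [this]
    calc _ ≤ ∑ j, |Hker k1 (X i) (X j) (Y i) (Y j) - Hker k2 (X i) (X j) (Y i) (Y j)| :=
          Finset.abs_sum_le_sum_abs _ _
    _ ≤ ∑ _j : Fin n, 4 * ε := Finset.sum_le_sum fun j _ => hd i j
    _ = 4 * ε * n := by simp [mul_comm]
  have hsq : ∀ i, |(A i) ^ 2 - (B i) ^ 2| ≤ 32 * ν * ε * (n:ℝ)^2 := by
    intro i
    have : (A i) ^ 2 - (B i) ^ 2 = (A i + B i) * (A i - B i) := by ring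
    rw [this, abs_mul]
    have h1 : |A i + B i| ≤ 8 * ν * n := by
      calc |A i + B i| ≤ |A i| + |B i| := abs_add_le _ _
      _ ≤ 4 * ν * n + 4 * ν * n := add_le_add (hA i) (hB i)
      _ = 8 * ν * n := by ring
    calc |A i + B i| * |A i - B i| ≤ (8 * ν * n) * (4 * ε * n) :=
        mul_le_mul h1 (hABd i) (abs_nonneg _) (by positivity)
    _ = 32 * ν * ε * (n:ℝ)^2 := by ring
  have hS1 : |∑ i, (A i)^2 - ∑ i, (B i)^2| ≤ 32 * ν * ε * (n:ℝ)^3 := by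
    rw [← Finset.sum_sub_distrib]
    calc _ ≤ ∑ i, |(A i)^2 - (B i)^2| := Finset.abs_sum_le_sum_abs _ _
    _ ≤ ∑ _i : Fin n, 32 * ν * ε * (n:ℝ)^2 := Finset.sum_le_sum fun i _ => hsq i
    _ = 32 * ν * ε * (n:ℝ)^3 := by simp; ring
  have hT1 : |∑ i, A i| ≤ 4 * ν * (n:ℝ)^2 := by
    calc _ ≤ ∑ i, |A i| := Finset.abs_sum_le_sum_abs _ _
    _ ≤ ∑ _i : Fin n, 4 * ν * n := Finset.sum_le_sum fun i _ => hA i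
    _ = 4 * ν * (n:ℝ)^2 := by simp; ring
  have hT2 : |∑ i, B i| ≤ 4 * ν * (n:ℝ)^2 := by
    calc _ ≤ ∑ i, |B i| := Finset.abs_sum_le_sum_abs _ _
    _ ≤ ∑ _i : Fin n, 4 * ν * n := Finset.sum_le_sum fun i _ => hB i
    _ = 4 * ν * (n:ℝ)^2 := by simp; ring
  have hTd : |∑ i, A i - ∑ i, B i| ≤ 4 * ε * (n:ℝ)^2 := by
    rw [← Finset.sum_sub_distrib]
    calc _ ≤ ∑ i, |A i - B i| := Finset.abs_sum_le_sum_abs _ _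
    _ ≤ ∑ _i : Fin n, 4 * ε * n := Finset.sum_le_sum fun i _ => hABd i
    _ = 4 * ε * (n:ℝ)^2 := by simp; ring
  have hS2 : |(∑ i, A i)^2 - (∑ i, B i)^2| ≤ 32 * ν * ε * (n:ℝ)^4 := by
    have : (∑ i, A i)^2 - (∑ i, B i)^2 = (∑ i, A i + ∑ i, B i) * (∑ i, A i - ∑ i, B i) := by ring
    rw [this, abs_mul]
    have h1 : |∑ i, A i + ∑ i, B i| ≤ 8 * ν * (n:ℝ)^2 := by
      calc _ ≤ |∑ i, A i| + |∑ i, B i| := abs_add_le _ _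
      _ ≤ 4 * ν * (n:ℝ)^2 + 4 * ν * (n:ℝ)^2 := add_le_add hT1 hT2
      _ = 8 * ν * (n:ℝ)^2 := by ring
    calc _ ≤ (8 * ν * (n:ℝ)^2) * (4 * ε * (n:ℝ)^2) :=
        mul_le_mul h1 hTd (abs_nonneg _) (by positivity)
    _ = 32 * ν * ε * (n:ℝ)^4 := by ring
  have key : sigmaHat2 n lam k1 X Y - sigmaHat2 n lam k2 X Y
      = (4 / (n:ℝ)^3) * (∑ i, (A i)^2 - ∑ i, (B i)^2)
        - (4 / (n:ℝ)^4) * ((∑ i, A i)^2 - (∑ i, B i)^2) := by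
    simp only [sigmaHat2, hAdef, hBdef]
    ring
  rw [key]
  have e1 : |(4 / (n:ℝ)^3) * (∑ i, (A i)^2 - ∑ i, (B i)^2)| ≤ (4 / (n:ℝ)^3) * (32 * ν * ε * (n:ℝ)^3) := by
    rw [abs_mul, abs_of_nonneg (by positivity : (0:ℝ) ≤ 4 / (n:ℝ)^3)]
    exact mul_le_mul_of_nonneg_left hS1 (by positivity)
  have e2 : |(4 / (n:ℝ)^4) * ((∑ i, A i)^2 - (∑ i, B i)^2)| ≤ (4 / (n:ℝ)^4) * (32 * ν * ε * (n:ℝ)^4) := by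
    rw [abs_mul, abs_of_nonneg (by positivity : (0:ℝ) ≤ 4 / (n:ℝ)^4)]
    exact mul_le_mul_of_nonneg_left hS2 (by positivity)
  have eq1 : (4 / (n:ℝ)^3) * (32 * ν * ε * (n:ℝ)^3) + (4 / (n:ℝ)^4) * (32 * ν * ε * (n:ℝ)^4) = 256 * ν * ε := by
    field_simp
    ring
  calc |(4 / (n:ℝ)^3) * (∑ i, (A i)^2 - ∑ i, (B i)^2)
        - (4 / (n:ℝ)^4) * ((∑ i, A i)^2 - (∑ i, B i)^2)|
      ≤ |(4 / (n:ℝ)^3) * (∑ i, (A i)^2 - ∑ i, (B i)^2)|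
        + |(4 / (n:ℝ)^4) * ((∑ i, A i)^2 - (∑ i, B i)^2)| := abs_sub _ _
    _ ≤ (4 / (n:ℝ)^3) * (32 * ν * ε * (n:ℝ)^3) + (4 / (n:ℝ)^4) * (32 * ν * ε * (n:ℝ)^4) :=
        add_le_add e1 e2
    _ = 256 * ν * ε := eq1

lemma abs4 (ν w x y z : ℝ) (h1 : |w| ≤ ν) (h2 : |x| ≤ ν) (h3 : |y| ≤ ν) (h4 : |z| ≤ ν) :
    |w + x - y - z| ≤ 4 * ν := by
  have a1 := abs_le.1 h1; have a2 := abs_le.1 h2; have a3 := abs_le.1 h3; have a4 := abs_le.1 h4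
  rw [abs_le]; constructor <;> linarith [a1.1, a1.2, a2.1, a2.2, a3.1, a3.2, a4.1, a4.2]

/-- the supremum over `Θ` of the adversarial variance-estimator error
`Δσ(θ) = σ̂²_{H1,λ}(S_P, S̃_Q; k_θ) − σ̂²_{H1,λ}(S_P, S_Q; k_θ)` is controlled by its maximum
over a `q`-net of `Θ` up to `512 L₁ ν q`. -/
theorem statement9 {d κ : ℕ} (Xset : Set (EuclideanSpace ℝ (Fin d)))
    (Θ : Set (EuclideanSpace ℝ (Fin κ)))
    (k : EuclideanSpace ℝ (Fin κ) → EuclideanSpace ℝ (Fin d) → EuclideanSpace ℝ (Fin d) → ℝ)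
    (ν L₁ q lam : ℝ) (hν : 0 < ν) (hL₁ : 0 < L₁) (hq : 0 < q) (hlam : 0 < lam)
    (hbound : ∀ θ ∈ Θ, ∀ x ∈ Xset, ∀ y ∈ Xset, |k θ x y| ≤ ν)
    (hlip : ∀ θ ∈ Θ, ∀ θ' ∈ Θ, ∀ x ∈ Xset, ∀ y ∈ Xset,
      |k θ x y - k θ' x y| ≤ L₁ * ‖θ - θ'‖)
    (Pn : ℕ) (hPn : 0 < Pn)
    (θs : Fin Pn → EuclideanSpace ℝ (Fin κ)) (hθs : ∀ i, θs i ∈ Θ)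
    -- `{θ_i}` is a `q`-net of `Θ`
    (hnet : ∀ θ ∈ Θ, ∃ i, ‖θ - θs i‖ ≤ q)
    (n : ℕ) (X Y Yt : Fin n → EuclideanSpace ℝ (Fin d))
    (hX : ∀ i, X i ∈ Xset) (hY : ∀ i, Y i ∈ Xset) (hYt : ∀ i, Yt i ∈ Xset) :
    ∀ θ ∈ Θ,
      |sigmaHat2 n lam (k θ) X Yt - sigmaHat2 n lam (k θ) X Y| ≤
        (Finset.univ.sup' (Finset.univ_nonempty_iff.mpr ⟨⟨0, hPn⟩⟩)
          fun i => |sigmaHat2 n lam (k (θs i)) X Yt - sigmaHat2 n lam (k (θs i)) X Y|)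
        + 512 * L₁ * ν * q := by
  intro θ hθ
  obtain ⟨i, hi⟩ := hnet θ hθ
  have hdk : ∀ x ∈ Xset, ∀ y ∈ Xset, |k θ x y - k (θs i) x y| ≤ L₁ * q := by
    intro x hx y hy
    exact (hlip θ hθ (θs i) (hθs i) x hx y hy).trans
      (mul_le_mul_of_nonneg_left hi hL₁.le)
  have hb : ∀ (Z : Fin n → EuclideanSpace ℝ (Fin d)), (∀ j, Z j ∈ Xset) →
      |sigmaHat2 n lam (k θ) X Z - sigmaHat2 n lam (k (θs i)) X Z| ≤ 256 * ν * (L₁ * q) := by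
    intro Z hZ
    apply sigma_diff n lam ν (L₁ * q) hν.le (by positivity)
    · intro a b
      exact abs4 ν _ _ _ _ (hbound θ hθ _ (hX a) _ (hX b)) (hbound θ hθ _ (hZ a) _ (hZ b))
        (hbound θ hθ _ (hX a) _ (hZ b)) (hbound θ hθ _ (hX b) _ (hZ a))
    · intro a b
      exact abs4 ν _ _ _ _ (hbound (θs i) (hθs i) _ (hX a) _ (hX b))
        (hbound (θs i) (hθs i) _ (hZ a) _ (hZ b)) (hbound (θs i) (hθs i) _ (hX a) _ (hZ b))
        (hbound (θs i) (hθs i) _ (hX b) _ (hZ a))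
    · intro a b
      have : Hker (k θ) (X a) (X b) (Z a) (Z b) - Hker (k (θs i)) (X a) (X b) (Z a) (Z b)
          = (k θ (X a) (X b) - k (θs i) (X a) (X b)) + (k θ (Z a) (Z b) - k (θs i) (Z a) (Z b))
            - (k θ (X a) (Z b) - k (θs i) (X a) (Z b))
            - (k θ (X b) (Z a) - k (θs i) (X b) (Z a)) := by
        simp [Hker]; ring
      rw [this]
      exact abs4 (L₁ * q) _ _ _ _ (hdk _ (hX a) _ (hX b)) (hdk _ (hZ a) _ (hZ b))
        (hdk _ (hX a) _ (hZ b)) (hdk _ (hX b) _ (hZ a))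
  have h1 := hb Yt hYt
  have h2 := hb Y hY
  have h3 : |sigmaHat2 n lam (k (θs i)) X Yt - sigmaHat2 n lam (k (θs i)) X Y| ≤
      Finset.univ.sup' (Finset.univ_nonempty_iff.mpr ⟨⟨0, hPn⟩⟩)
        fun j => |sigmaHat2 n lam (k (θs j)) X Yt - sigmaHat2 n lam (k (θs j)) X Y| :=
    Finset.le_sup'
      (fun j => |sigmaHat2 n lam (k (θs j)) X Yt - sigmaHat2 n lam (k (θs j)) X Y|)
      (Finset.mem_univ i)
  set a1 := sigmaHat2 n lam (k θ) X Yt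
  set a2 := sigmaHat2 n lam (k θ) X Y
  set b1 := sigmaHat2 n lam (k (θs i)) X Yt
  set b2 := sigmaHat2 n lam (k (θs i)) X Y
  have key : |a1 - a2| ≤ |b1 - b2| + (|a1 - b1| + |a2 - b2|) := by
    have e : a1 - a2 = (b1 - b2) + ((a1 - b1) - (a2 - b2)) := by ring
    calc |a1 - a2| = |(b1 - b2) + ((a1 - b1) - (a2 - b2))| := by rw [e]
    _ ≤ |b1 - b2| + |(a1 - b1) - (a2 - b2)| := abs_add_le _ _
    _ ≤ |b1 - b2| + (|a1 - b1| + |a2 - b2|) := by gcongr; exact abs_sub _ _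
  have : 256 * ν * (L₁ * q) + 256 * ν * (L₁ * q) = 512 * L₁ * ν * q := by ring
  linarith [key, h1, h2, h3]


end
end

section
/- Let {k_θ}_{θ ∈ Θ} be a family of kernels on X ⊆ ℝ^d satisfying sup_{θ∈Θ} sup_{x,y∈X} |k_θ(x,y)| ≤ ν and |k_θ(x,y) − k_{θ'}(x,y)| ≤ L₁‖θ−θ'‖. Then for any samples S_P = {x_i}_{i=1}^n and S_Q = {y_i}_{i=1}^n and any θ, θ' ∈ Θ, | σ̂²_{H1,λ}(S_P, S_Q; k_θ) − σ̂²_{H1,λ}(S_P, S_Q; k_{θ'}) | ≤ 256 L₁ ν ‖θ − θ'‖. -/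
noncomputable section

/-- Lemma 19 of Liu et al. 2020: Lipschitz continuity of the regularized
variance estimator in the kernel parameter:
`|σ̂²_{H1,λ}(S_P, S_Q; k_θ) − σ̂²_{H1,λ}(S_P, S_Q; k_θ')| ≤ 256 L₁ ν ‖θ − θ'‖`. -/
theorem statement13 {d κ : ℕ} (Xset : Set (EuclideanSpace ℝ (Fin d)))
    (Θ : Set (EuclideanSpace ℝ (Fin κ)))
    (k : EuclideanSpace ℝ (Fin κ) → EuclideanSpace ℝ (Fin d) → EuclideanSpace ℝ (Fin d) → ℝ)
    (ν L₁ lam : ℝ) (hν : 0 < ν) (hL₁ : 0 < L₁) (hlam : 0 < lam)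
    (hbound : ∀ θ ∈ Θ, ∀ x ∈ Xset, ∀ y ∈ Xset, |k θ x y| ≤ ν)
    (hlip : ∀ θ ∈ Θ, ∀ θ' ∈ Θ, ∀ x ∈ Xset, ∀ y ∈ Xset,
      |k θ x y - k θ' x y| ≤ L₁ * ‖θ - θ'‖)
    (n : ℕ) (X Y : Fin n → EuclideanSpace ℝ (Fin d))
    (hX : ∀ i, X i ∈ Xset) (hY : ∀ i, Y i ∈ Xset)
    (θ θ' : EuclideanSpace ℝ (Fin κ)) (hθ : θ ∈ Θ) (hθ' : θ' ∈ Θ) :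
    |sigmaHat2 n lam (k θ) X Y - sigmaHat2 n lam (k θ') X Y| ≤ 256 * L₁ * ν * ‖θ - θ'‖ := by
  classical
  set t := ‖θ - θ'‖ with ht
  have ht0 : 0 ≤ t := norm_nonneg _
  set ε := L₁ * t with hεdef
  have hε0 : 0 ≤ ε := mul_nonneg hL₁.le ht0
  set H1 : Fin n → Fin n → ℝ := fun i j => Hker (k θ) (X i) (X j) (Y i) (Y j) with hH1
  set H2 : Fin n → Fin n → ℝ := fun i j => Hker (k θ') (X i) (X j) (Y i) (Y j) with hH2
  have hHb : ∀ (i j : Fin n), |H1 i j| ≤ 4 * ν ∧ |H2 i j| ≤ 4 * ν ∧ |H1 i j - H2 i j| ≤ 4 * ε := by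
    intro i j
    have a1 := abs_le.mp (hbound θ hθ _ (hX i) _ (hX j))
    have a2 := abs_le.mp (hbound θ hθ _ (hY i) _ (hY j))
    have a3 := abs_le.mp (hbound θ hθ _ (hX i) _ (hY j))
    have a4 := abs_le.mp (hbound θ hθ _ (hX j) _ (hY i))
    have b1 := abs_le.mp (hbound θ' hθ' _ (hX i) _ (hX j))
    have b2 := abs_le.mp (hbound θ' hθ' _ (hY i) _ (hY j))
    have b3 := abs_le.mp (hbound θ' hθ' _ (hX i) _ (hY j))
    have b4 := abs_le.mp (hbound θ' hθ' _ (hX j) _ (hY i))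
    have c1 := abs_le.mp (hlip θ hθ θ' hθ' _ (hX i) _ (hX j))
    have c2 := abs_le.mp (hlip θ hθ θ' hθ' _ (hY i) _ (hY j))
    have c3 := abs_le.mp (hlip θ hθ θ' hθ' _ (hX i) _ (hY j))
    have c4 := abs_le.mp (hlip θ hθ θ' hθ' _ (hX j) _ (hY i))
    refine ⟨abs_le.mpr ⟨?_, ?_⟩, abs_le.mpr ⟨?_, ?_⟩, abs_le.mpr ⟨?_, ?_⟩⟩ <;>
      simp only [hH1, hH2, Hker, hεdef] <;>
      linarith [c1.1, c1.2, c2.1, c2.2, c3.1, c3.2, c4.1, c4.2]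
  -- row sums
  have hrow : ∀ i : Fin n, |∑ j, H1 i j| ≤ (n : ℝ) * (4 * ν) := by
    intro i
    calc |∑ j, H1 i j| ≤ ∑ j, |H1 i j| := Finset.abs_sum_le_sum_abs _ _
      _ ≤ ∑ _j : Fin n, 4 * ν := Finset.sum_le_sum fun j _ => (hHb i j).1
      _ = (n : ℝ) * (4 * ν) := by simp [Finset.sum_const, nsmul_eq_mul]
  have hrow' : ∀ i : Fin n, |∑ j, H2 i j| ≤ (n : ℝ) * (4 * ν) := by
    intro i
    calc |∑ j, H2 i j| ≤ ∑ j, |H2 i j| := Finset.abs_sum_le_sum_abs _ _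
      _ ≤ ∑ _j : Fin n, 4 * ν := Finset.sum_le_sum fun j _ => (hHb i j).2.1
      _ = (n : ℝ) * (4 * ν) := by simp [Finset.sum_const, nsmul_eq_mul]
  have hrowd : ∀ i : Fin n, |∑ j, H1 i j - ∑ j, H2 i j| ≤ (n : ℝ) * (4 * ε) := by
    intro i
    rw [← Finset.sum_sub_distrib]
    calc |∑ j, (H1 i j - H2 i j)| ≤ ∑ j, |H1 i j - H2 i j| := Finset.abs_sum_le_sum_abs _ _
      _ ≤ ∑ _j : Fin n, 4 * ε := Finset.sum_le_sum fun j _ => (hHb i j).2.2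
      _ = (n : ℝ) * (4 * ε) := by simp [Finset.sum_const, nsmul_eq_mul]
  have sqlem : ∀ a b M e : ℝ, |a| ≤ M → |b| ≤ M → |a - b| ≤ e → |a ^ 2 - b ^ 2| ≤ e * (2 * M) := by
    intro a b M e ha hb hab
    have he0 : 0 ≤ e := le_trans (abs_nonneg _) hab
    have h : a ^ 2 - b ^ 2 = (a - b) * (a + b) := by ring
    rw [h, abs_mul]
    have hsum : |a + b| ≤ 2 * M := by
      calc |a + b| ≤ |a| + |b| := abs_add_le _ _
        _ ≤ 2 * M := by linarith
    exact mul_le_mul hab hsum (abs_nonneg _) he0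
  -- term A
  have hA : |∑ i, (∑ j, H1 i j) ^ 2 - ∑ i, (∑ j, H2 i j) ^ 2|
      ≤ (n : ℝ) * ((n : ℝ) * (4 * ε) * (2 * ((n : ℝ) * (4 * ν)))) := by
    rw [← Finset.sum_sub_distrib]
    calc |∑ i, ((∑ j, H1 i j) ^ 2 - (∑ j, H2 i j) ^ 2)|
        ≤ ∑ i, |(∑ j, H1 i j) ^ 2 - (∑ j, H2 i j) ^ 2| := Finset.abs_sum_le_sum_abs _ _
      _ ≤ ∑ _i : Fin n, (n : ℝ) * (4 * ε) * (2 * ((n : ℝ) * (4 * ν))) :=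
          Finset.sum_le_sum fun i _ => sqlem _ _ _ _ (hrow i) (hrow' i) (hrowd i)
      _ = (n : ℝ) * ((n : ℝ) * (4 * ε) * (2 * ((n : ℝ) * (4 * ν)))) := by
          simp [Finset.sum_const, nsmul_eq_mul]
  -- term B
  have hB1 : |∑ i, ∑ j, H1 i j| ≤ (n : ℝ) * ((n : ℝ) * (4 * ν)) := by
    calc |∑ i, ∑ j, H1 i j| ≤ ∑ i, |∑ j, H1 i j| := Finset.abs_sum_le_sum_abs _ _
      _ ≤ ∑ _i : Fin n, (n : ℝ) * (4 * ν) := Finset.sum_le_sum fun i _ => hrow i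
      _ = (n : ℝ) * ((n : ℝ) * (4 * ν)) := by simp [Finset.sum_const, nsmul_eq_mul]
  have hB2 : |∑ i, ∑ j, H2 i j| ≤ (n : ℝ) * ((n : ℝ) * (4 * ν)) := by
    calc |∑ i, ∑ j, H2 i j| ≤ ∑ i, |∑ j, H2 i j| := Finset.abs_sum_le_sum_abs _ _
      _ ≤ ∑ _i : Fin n, (n : ℝ) * (4 * ν) := Finset.sum_le_sum fun i _ => hrow' i
      _ = (n : ℝ) * ((n : ℝ) * (4 * ν)) := by simp [Finset.sum_const, nsmul_eq_mul]
  have hBd : |∑ i, ∑ j, H1 i j - ∑ i, ∑ j, H2 i j| ≤ (n : ℝ) * ((n : ℝ) * (4 * ε)) := by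
    rw [← Finset.sum_sub_distrib]
    calc |∑ i, (∑ j, H1 i j - ∑ j, H2 i j)|
        ≤ ∑ i, |∑ j, H1 i j - ∑ j, H2 i j| := Finset.abs_sum_le_sum_abs _ _
      _ ≤ ∑ _i : Fin n, (n : ℝ) * (4 * ε) := Finset.sum_le_sum fun i _ => hrowd i
      _ = (n : ℝ) * ((n : ℝ) * (4 * ε)) := by simp [Finset.sum_const, nsmul_eq_mul]
  have hBsq : |(∑ i, ∑ j, H1 i j) ^ 2 - (∑ i, ∑ j, H2 i j) ^ 2|
      ≤ (n : ℝ) * ((n : ℝ) * (4 * ε)) * (2 * ((n : ℝ) * ((n : ℝ) * (4 * ν)))) :=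
    sqlem _ _ _ _ hB1 hB2 hBd
  rcases Nat.eq_zero_or_pos n with hn | hn
  · subst hn
    simp only [sigmaHat2]
    simp
    positivity
  · have hN : (0 : ℝ) < (n : ℝ) := by exact_mod_cast hn
    set A1 := ∑ i, (∑ j, H1 i j) ^ 2
    set A2 := ∑ i, (∑ j, H2 i j) ^ 2
    set B1 := ∑ i, ∑ j, H1 i j
    set B2 := ∑ i, ∑ j, H2 i j
    have key : sigmaHat2 n lam (k θ) X Y - sigmaHat2 n lam (k θ') X Y
        = (4 / (n : ℝ) ^ 3) * (A1 - A2) - (4 / (n : ℝ) ^ 4) * (B1 ^ 2 - B2 ^ 2) := by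
      simp only [sigmaHat2, hH1, hH2]; ring
    rw [key]
    have hc3 : (0 : ℝ) ≤ 4 / (n : ℝ) ^ 3 := by positivity
    have hc4 : (0 : ℝ) ≤ 4 / (n : ℝ) ^ 4 := by positivity
    calc |4 / (n : ℝ) ^ 3 * (A1 - A2) - 4 / (n : ℝ) ^ 4 * (B1 ^ 2 - B2 ^ 2)|
        ≤ |4 / (n : ℝ) ^ 3 * (A1 - A2)| + |4 / (n : ℝ) ^ 4 * (B1 ^ 2 - B2 ^ 2)| :=
          abs_sub _ _
      _ = 4 / (n : ℝ) ^ 3 * |A1 - A2| + 4 / (n : ℝ) ^ 4 * |B1 ^ 2 - B2 ^ 2| := by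
          rw [abs_mul, abs_mul, abs_of_nonneg hc3, abs_of_nonneg hc4]
      _ ≤ 4 / (n : ℝ) ^ 3 * ((n : ℝ) * ((n : ℝ) * (4 * ε) * (2 * ((n : ℝ) * (4 * ν)))))
          + 4 / (n : ℝ) ^ 4 * ((n : ℝ) * ((n : ℝ) * (4 * ε)) * (2 * ((n : ℝ) * ((n : ℝ) * (4 * ν))))) := by
          gcongr
      _ = 128 * ε * ν + 128 * ε * ν := by
          field_simp
          ring
      _ = 256 * L₁ * ν * t := by rw [hεdef]; ring

end
end
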